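/- For every integer d ≥ 1 there is a constant B_d, depending only on d, with the following property: if P(x) = a_d x^d + a_{d−1} x^{d−1} + … + a_1 x + a_0 is a real semi-non-degenerating (SND) polynomial and 0 < ε < 1, then {x ∈ ℝ : |P(x)| ≤ ε^d} ⊆ ⋃_j {x ∈ ℝ : |x − z_j| ≤ B_d ε}, where the union is over the (possibly complex) roots z_j of P and |x − z_j| denotes the complex modulus. -/

import Mathlib

open Polynomial Multiset

noncomputable def Complex.abs : AbsoluteValue ℂ ℝ := NormedField.toAbsoluteValue ℂ

theorem Complex.norm_eq_abs (z : ℂ) : ‖z‖ = Complex.abs z := rfl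

@[simp] theorem Complex.abs_ofReal (r : ℝ) : Complex.abs (r : ℂ) = |r| :=
  (Complex.norm_real r).trans (Real.norm_eq_abs r)

private lemma my_choose_le_two_pow (n t : ℕ) : n.choose t ≤ 2 ^ n := by
  rcases le_or_gt t n with h | h
  · calc n.choose t ≤ ∑ i ∈ Finset.range (n+1), n.choose i :=
        Finset.single_le_sum (fun i _ => Nat.zero_le _) (Finset.mem_range.2 (by omega))
    _ = 2 ^ n := Nat.sum_range_choose n
  · rw [Nat.choose_eq_zero_of_lt h]; positivity

private lemma prod_abs_nonneg (S : Multiset ℂ) : 0 ≤ (S.map Complex.abs).prod := by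
  apply Multiset.prod_nonneg
  intro a ha
  obtain ⟨z, _, rfl⟩ := Multiset.mem_map.1 ha
  exact AbsoluteValue.nonneg _ _

private lemma esymm_abs_le (Z : Multiset ℂ) (t : ℕ) (bnd : ℝ) (hbnd : 0 ≤ bnd)
    (h : ∀ A ∈ Z.powersetCard t, (A.map Complex.abs).prod ≤ bnd) :
    Complex.abs (Z.esymm t) ≤ 2 ^ (Multiset.card Z) * bnd := by
  have h1 : Complex.abs (Z.esymm t) ≤ (((Z.powersetCard t).map Multiset.prod).map Complex.abs).sum := by
    rw [Multiset.esymm]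
    simpa [Complex.norm_eq_abs] using norm_multiset_sum_le ((Z.powersetCard t).map Multiset.prod)
  have h2 : (((Z.powersetCard t).map Multiset.prod).map Complex.abs).sum
      ≤ (Multiset.card (((Z.powersetCard t).map Multiset.prod).map Complex.abs)) • bnd := by
    apply Multiset.sum_le_card_nsmul
    intro a ha
    rw [Multiset.map_map] at ha
    obtain ⟨A, hA, rfl⟩ := Multiset.mem_map.1 ha
    calc (Complex.abs ∘ Multiset.prod) A = (A.map Complex.abs).prod := map_multiset_prod Complex.abs A
    _ ≤ bnd := h A hA
  have h3 : Multiset.card (((Z.powersetCard t).map Multiset.prod).map Complex.abs) = (Multiset.card Z).choose t := by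
    rw [Multiset.card_map, Multiset.card_map, Multiset.card_powersetCard]
  calc Complex.abs (Z.esymm t) ≤ _ := h1
  _ ≤ _ := h2
  _ = ((Multiset.card Z).choose t : ℝ) * bnd := by rw [h3, nsmul_eq_mul]
  _ ≤ 2 ^ (Multiset.card Z) * bnd := by
      apply mul_le_mul_of_nonneg_right _ hbnd
      exact_mod_cast my_choose_le_two_pow _ _

private lemma pigeon (M : Multiset ℝ) (N : ℕ) (hM : Multiset.card M < N) (y : ℕ → ℝ) (δ : ℝ)
    (hsep : ∀ s, s < N → ∀ t, t < N → ∀ r : ℝ, |r - y s| < δ → |r - y t| < δ → s = t) :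
    ∃ t, t < N ∧ ∀ r ∈ M, δ ≤ |r - y t| := by
  classical
  by_contra hcon
  push_neg at hcon
  have key : ∀ (M' : Multiset ℝ),
      (∑ t ∈ Finset.range N, M'.countP (fun r => |r - y t| < δ)) ≤ Multiset.card M' := by
    intro M'
    induction M' using Multiset.induction with
    | empty => simp
    | cons a s ih =>
      simp only [Multiset.countP_cons, Multiset.card_cons, Finset.sum_add_distrib]
      have hone : (∑ t ∈ Finset.range N, if |a - y t| < δ then 1 else 0) ≤ 1 := by
        rw [← Finset.card_filter]
        apply Finset.card_le_one.2
        intro s hs t ht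
        simp only [Finset.mem_filter, Finset.mem_range] at hs ht
        exact hsep s hs.1 t ht.1 a hs.2 ht.2
      omega
  have lower : N ≤ ∑ t ∈ Finset.range N, M.countP (fun r => |r - y t| < δ) := by
    calc N = ∑ _t ∈ Finset.range N, 1 := by simp
    _ ≤ _ := by
      apply Finset.sum_le_sum
      intro t ht
      obtain ⟨r, hrM, hr⟩ := hcon t (Finset.mem_range.1 ht)
      exact Multiset.countP_pos.2 ⟨r, hrM, hr⟩
  have := key M
  omega

set_option maxHeartbeats 1000000 in
private lemma snd_caseA (d : ℕ) (hd : 1 ≤ d) (Z : Multiset ℂ) (lc : ℝ) (k m : ℕ)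
    (hm : 1 ≤ m) (hkm : k ≤ m) (hcard : Multiset.card Z = k + m) (hnd : Multiset.card Z ≤ d)
    (hlc0 : 0 ≤ lc)
    (hes : 1 ≤ lc * Complex.abs (Z.esymm k))
    (ha0 : lc * (Z.map Complex.abs).prod ≤ ((d:ℝ)+1) * 2^d)
    (ε x : ℝ) (hε0 : 0 < ε) (hε1 : ε < 1)
    (hfar : ∀ z ∈ Z, (2:ℝ)^(20*(d+1)^2) * ε < Complex.abs ((x:ℂ) - z))
    (hxB : |x| ≤ (2:ℝ)^(20*(d+1)^2)) :
    ε ^ d < lc * (Z.map (fun z => Complex.abs ((x:ℂ) - z))).prod := by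
  classical
  set B : ℝ := (2:ℝ)^(20*(d+1)^2) with hBdef
  set n := Multiset.card Z with hn
  have hn1 : 1 ≤ n := by omega
  have hB1 : (1:ℝ) ≤ B := one_le_pow₀ one_le_two
  have hd2 : ((d:ℝ)+1) ≤ 2^d := by
    have h := Nat.lt_two_pow_self (n := d)
    have h2 : ((d+1 : ℕ) : ℝ) ≤ ((2^d : ℕ) : ℝ) := by exact_mod_cast h
    push_cast at h2
    linarith
  set ρ : ℝ := B / (2 * 2^(2*d)) with hρdef
  have hρpos : (0:ℝ) < ρ := by positivity
  have hρbig : ((d:ℝ)+1) * 2^d * 2^d < ρ := by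
    rw [hρdef, lt_div_iff₀ (by positivity)]
    calc ((d:ℝ)+1) * 2^d * 2^d * (2 * 2^(2*d)) ≤ 2^d * 2^d * 2^d * (2 * 2^(2*d)) := by
          have h2d0 : (0:ℝ) < 2^d := by positivity
          have h2d0' : (0:ℝ) < 2^(2*d) := by positivity
          gcongr
    _ = 2^(d + d + d + (2*d+1)) := by
          rw [pow_add, pow_add, pow_add, pow_succ]
          ring
    _ < B := by
          rw [hBdef]
          apply pow_lt_pow_right₀ one_lt_two
          nlinarith
  have hρ1 : (1:ℝ) ≤ ρ := by
    have h2d0 : (1:ℝ) ≤ 2^d := one_le_pow₀ one_le_two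
    have hdc : (0:ℝ) ≤ (d:ℝ) := Nat.cast_nonneg d
    have e1 : (1:ℝ) ≤ ((d:ℝ)+1)*2^d*2^d := by
      calc (1:ℝ) = 1*1*1 := by ring
      _ ≤ ((d:ℝ)+1)*2^d*2^d := by gcongr <;> linarith
    linarith
  have habsx : Complex.abs ((x:ℂ)) ≤ B := by rw [Complex.abs_ofReal]; exact hxB
  have hA : ∀ z ∈ Z, ε/2 * max 1 (Complex.abs z) ≤ Complex.abs ((x:ℂ) - z) := by
    intro z hz
    rcases le_or_gt (Complex.abs z) (2*B) with h | h
    · have h1 : max 1 (Complex.abs z) ≤ 2*B := max_le (by linarith) h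
      have h2 := hfar z hz
      calc ε/2 * max 1 (Complex.abs z) ≤ ε/2*(2*B) :=
            mul_le_mul_of_nonneg_left h1 (by positivity)
      _ = B * ε := by ring
      _ ≤ _ := le_of_lt h2
    · have hxz : Complex.abs z - B ≤ Complex.abs ((x:ℂ) - z) := by
        have h2 : Complex.abs z - Complex.abs ((x:ℂ)) ≤ Complex.abs (z - (x:ℂ)) := by
          have := norm_sub_norm_le z ((x:ℂ)); simpa [Complex.norm_eq_abs] using this
        rw [AbsoluteValue.map_sub]
        linarith
      have hz1 : (1:ℝ) ≤ Complex.abs z := by linarith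
      rw [max_eq_right hz1]
      have hzz := mul_nonneg (sub_nonneg.2 hε1.le) (AbsoluteValue.nonneg Complex.abs z)
      nlinarith [hzz]
  have hz0 : ∃ z₀ ∈ Z, Complex.abs z₀ ≤ ρ := by
    by_contra hcontra
    push_neg at hcontra
    have hb : ∀ A ∈ Z.powersetCard k, (A.map Complex.abs).prod ≤ (Z.map Complex.abs).prod / ρ := by
      intro A hAmem
      obtain ⟨hAle, hAcard⟩ := (Multiset.mem_powersetCard).1 hAmem
      have hsplit : (Z.map Complex.abs).prod
          = ((Z - A).map Complex.abs).prod * (A.map Complex.abs).prod := by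
        rw [← Multiset.prod_add, ← Multiset.map_add, tsub_add_cancel_of_le hAle]
      have hcardZA : Multiset.card (Z - A) = m := by
        rw [Multiset.card_sub hAle]
        omega
      have hge : ρ ≤ ((Z - A).map Complex.abs).prod := by
        calc ρ = ρ ^ 1 := (pow_one ρ).symm
        _ ≤ ρ ^ m := pow_le_pow_right₀ hρ1 hm
        _ = (((Z - A)).map (fun _ : ℂ => ρ)).prod := by
            rw [Multiset.map_const', Multiset.prod_replicate, hcardZA]
        _ ≤ _ := by
            apply Multiset.prod_map_le_prod_map₀
            · intro i _; exact hρpos.le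
            · intro i hi
              exact (hcontra i (Multiset.mem_of_le (Multiset.sub_le_self _ _) hi)).le
      have hApos : 0 ≤ (A.map Complex.abs).prod := prod_abs_nonneg A
      rw [le_div_iff₀ hρpos, hsplit]
      have := mul_le_mul_of_nonneg_right hge hApos
      linarith
    have h1 := esymm_abs_le Z k _ (div_nonneg (prod_abs_nonneg Z) hρpos.le) hb
    have h2 : (1:ℝ) ≤ lc * (2 ^ n * ((Z.map Complex.abs).prod / ρ)) :=
      le_trans hes (mul_le_mul_of_nonneg_left h1 hlc0)
    have hpZ : 0 ≤ (Z.map Complex.abs).prod := prod_abs_nonneg Z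
    have h4 : (2:ℝ)^n ≤ 2^d := pow_le_pow_right₀ one_le_two hnd
    have h5 : lc * (2 ^ n * ((Z.map Complex.abs).prod / ρ))
        = (2:ℝ)^n * (lc * (Z.map Complex.abs).prod) / ρ := by ring
    rw [h5] at h2
    have h6 : (2:ℝ)^n * (lc * (Z.map Complex.abs).prod) ≤ 2^d * (((d:ℝ)+1) * 2^d) :=
      mul_le_mul h4 ha0 (mul_nonneg hlc0 hpZ) (by positivity)
    have h7 : (2:ℝ)^d * (((d:ℝ)+1)*2^d) / ρ < 1 := by
      rw [div_lt_one hρpos]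
      calc (2:ℝ)^d * (((d:ℝ)+1)*2^d) = ((d:ℝ)+1) * 2^d * 2^d := by ring
      _ < ρ := hρbig
    have h8 : (2:ℝ)^n * (lc * (Z.map Complex.abs).prod) / ρ ≤ 2^d * (((d:ℝ)+1)*2^d)/ρ := by
      gcongr
    linarith
  obtain ⟨z₀, hz₀Z, hz₀ρ⟩ := hz0
  set pMax : ℝ := (Z.map (fun z => max 1 (Complex.abs z))).prod with hpMaxdef
  have hpMax1 : (1:ℝ) ≤ pMax := by
    apply Multiset.one_le_prod
    intro r hr
    obtain ⟨z,_,rfl⟩ := Multiset.mem_map.1 hr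
    exact le_max_left _ _
  have hkey : (1:ℝ) ≤ 2^n * (lc * pMax) := by
    have hb : ∀ A ∈ Z.powersetCard k, (A.map Complex.abs).prod ≤ pMax := by
      intro A hAmem
      obtain ⟨hAle, hAcard⟩ := (Multiset.mem_powersetCard).1 hAmem
      calc (A.map Complex.abs).prod ≤ (A.map (fun z => max 1 (Complex.abs z))).prod := by
            apply Multiset.prod_map_le_prod_map₀
            · intro i _; exact AbsoluteValue.nonneg _ _
            · intro i _; exact le_max_right _ _
      _ ≤ pMax := by
          rw [hpMaxdef]
          conv_rhs => rw [← tsub_add_cancel_of_le hAle]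
          rw [Multiset.map_add, Multiset.prod_add]
          have h1 : (1:ℝ) ≤ ((Z - A).map (fun z => max 1 (Complex.abs z))).prod := by
            apply Multiset.one_le_prod
            intro r hr
            obtain ⟨z,_,rfl⟩ := Multiset.mem_map.1 hr
            exact le_max_left _ _
          have h2 : (0:ℝ) ≤ (A.map (fun z => max 1 (Complex.abs z))).prod := by
            apply Multiset.prod_nonneg
            intro r hr
            obtain ⟨z,_,rfl⟩ := Multiset.mem_map.1 hr
            positivity
          exact le_mul_of_one_le_left h2 h1
    have h1 := esymm_abs_le Z k pMax (by linarith) hb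
    calc (1:ℝ) ≤ lc * Complex.abs (Z.esymm k) := hes
    _ ≤ lc * (2^n * pMax) := mul_le_mul_of_nonneg_left h1 hlc0
    _ = 2^n * (lc * pMax) := by ring
  have hsplitx : (Z.map (fun z => Complex.abs ((x:ℂ) - z))).prod
      = Complex.abs ((x:ℂ) - z₀) * ((Z.erase z₀).map (fun z => Complex.abs ((x:ℂ) - z))).prod := by
    conv_lhs => rw [← Multiset.cons_erase hz₀Z]
    rw [Multiset.map_cons, Multiset.prod_cons]
  have herase : ((Z.erase z₀).map (fun z => ε/2 * max 1 (Complex.abs z))).prod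
      ≤ ((Z.erase z₀).map (fun z => Complex.abs ((x:ℂ) - z))).prod := by
    apply Multiset.prod_map_le_prod_map₀
    · intro i _; positivity
    · intro i hi; exact hA i (Multiset.mem_of_mem_erase hi)
  have hz₀far : (2 * 2^(2*d)) * (ε/2 * max 1 (Complex.abs z₀)) ≤ Complex.abs ((x:ℂ) - z₀) := by
    have h2 := hfar z₀ hz₀Z
    have hmaxρ : max 1 (Complex.abs z₀) ≤ ρ := max_le hρ1 hz₀ρ
    have h3 : (2 * 2^(2*d)) * (ε/2 * max 1 (Complex.abs z₀)) ≤ (2*2^(2*d)) * (ε/2 * ρ) := by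
      have : ε/2 * max 1 (Complex.abs z₀) ≤ ε/2 * ρ :=
        mul_le_mul_of_nonneg_left hmaxρ (by positivity)
      exact mul_le_mul_of_nonneg_left this (by positivity)
    have h4 : (2*2^(2*d)) * (ε/2 * ρ) = B * ε / 2 := by
      rw [hρdef]
      field_simp
    have h5 : B * ε / 2 ≤ B * ε := by
      have : (0:ℝ) ≤ B * ε := by positivity
      linarith
    linarith
  have hz₀split : (Z.map (fun z => ε/2 * max 1 (Complex.abs z))).prod
      = (ε/2 * max 1 (Complex.abs z₀)) * ((Z.erase z₀).map (fun z => ε/2 * max 1 (Complex.abs z))).prod := by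
    conv_lhs => rw [← Multiset.cons_erase hz₀Z]
    rw [Multiset.map_cons, Multiset.prod_cons]
  have hmain : (2*2^(2*d)) * ((Z.map (fun z => ε/2 * max 1 (Complex.abs z))).prod)
      ≤ (Z.map (fun z => Complex.abs ((x:ℂ) - z))).prod := by
    rw [hsplitx, hz₀split]
    have h1 : 0 ≤ ((Z.erase z₀).map (fun z => ε/2 * max 1 (Complex.abs z))).prod := by
      apply Multiset.prod_nonneg
      intro a ha
      obtain ⟨z,_,rfl⟩ := Multiset.mem_map.1 ha
      positivity
    calc (2*2^(2*d)) * ((ε/2 * max 1 (Complex.abs z₀)) * ((Z.erase z₀).map (fun z => ε/2 * max 1 (Complex.abs z))).prod)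
        = ((2*2^(2*d)) * (ε/2 * max 1 (Complex.abs z₀))) * ((Z.erase z₀).map (fun z => ε/2 * max 1 (Complex.abs z))).prod := by ring
    _ ≤ Complex.abs ((x:ℂ) - z₀) * ((Z.erase z₀).map (fun z => ε/2 * max 1 (Complex.abs z))).prod :=
        mul_le_mul_of_nonneg_right hz₀far h1
    _ ≤ Complex.abs ((x:ℂ) - z₀) * ((Z.erase z₀).map (fun z => Complex.abs ((x:ℂ) - z))).prod :=
        mul_le_mul_of_nonneg_left herase (AbsoluteValue.nonneg _ _)
  have hprodsplit : (Z.map (fun z => ε/2 * max 1 (Complex.abs z))).prod = (ε/2)^n * pMax := by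
    have : (Z.map (fun z => ε/2 * max 1 (Complex.abs z))).prod
        = (Z.map (fun _ : ℂ => ε/2)).prod * (Z.map (fun z => max 1 (Complex.abs z))).prod :=
      Multiset.prod_map_mul
    rw [this, Multiset.map_const', Multiset.prod_replicate]
  have hfinal : ε^d < lc * ((2*2^(2*d)) * ((ε/2)^n * pMax)) := by
    have hc : lc * ((2*2^(2*d)) * ((ε/2)^n * pMax)) = (2*2^(2*d)) * (ε/2)^n * (lc * pMax) := by ring
    rw [hc]
    have h1 : (1:ℝ)/2^n ≤ lc * pMax := by
      rw [div_le_iff₀ (pow_pos two_pos n)]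
      calc (1:ℝ) ≤ 2^n * (lc * pMax) := hkey
      _ = lc * pMax * 2^n := by ring
    have hεn : ε^d ≤ ε^n := pow_le_pow_of_le_one hε0.le hε1.le hnd
    calc ε^d ≤ ε^n := hεn
    _ < 2 * ε^n := by linarith [pow_pos hε0 n]
    _ ≤ (2*2^(2*d)) * (ε/2)^n * (1/2^n) := by
        have h2 : (ε/2)^n = ε^n/2^n := div_pow ε 2 n
        rw [h2]
        have h3 : (2:ℝ)^(2*n) ≤ 2^(2*d) := pow_le_pow_right₀ one_le_two (by omega)
        have h4 : (2:ℝ)^(2*n) = 2^n * 2^n := by rw [two_mul, pow_add]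
        have h5 : (0:ℝ) < 2^n := by positivity
        have h6 : 2*2^(2*d) * (ε^n/2^n) * (1/2^n) = 2*ε^n * (2^(2*d)/(2^n*2^n)) := by ring
        rw [h6]
        have h7 : (1:ℝ) ≤ 2^(2*d)/(2^n*2^n) := by
          rw [le_div_iff₀ (by positivity)]
          rw [← h4]
          linarith
        have h8 := mul_le_mul_of_nonneg_left h7 (by positivity : (0:ℝ) ≤ 2*ε^n)
        rw [mul_one] at h8
        linarith
    _ ≤ (2*2^(2*d)) * (ε/2)^n * (lc*pMax) := by
        apply mul_le_mul_of_nonneg_left h1 (by positivity)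
  calc ε^d < lc * ((2*2^(2*d)) * ((ε/2)^n * pMax)) := hfinal
  _ ≤ lc * (Z.map (fun z => Complex.abs ((x:ℂ) - z))).prod := by
      apply mul_le_mul_of_nonneg_left _ hlc0
      rw [← hprodsplit]
      exact hmain

set_option maxHeartbeats 2000000 in
private lemma snd_caseB (d : ℕ) (hd : 1 ≤ d) (Z : Multiset ℂ) (lc : ℝ) (k m : ℕ)
    (hm : 1 ≤ m) (hkm : k ≤ m) (hcard : Multiset.card Z = k + m) (hnd : Multiset.card Z ≤ d)
    (hlc0 : 0 ≤ lc)
    (hes : 1 ≤ lc * Complex.abs (Z.esymm k))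
    (heval : ∀ y : ℝ, 0 ≤ y → y ≤ 2 →
      lc * ((Z.map (fun z => Complex.abs ((y:ℂ) - z))).prod) ≤ ((d:ℝ)+1) * 2^d)
    (ε x : ℝ) (hε0 : 0 < ε) (hε1 : ε < 1)
    (hfar : ∀ z ∈ Z, (2:ℝ)^(20*(d+1)^2) * ε < Complex.abs ((x:ℂ) - z))
    (hxB : (2:ℝ)^(20*(d+1)^2) < |x|) :
    ε ^ d < lc * (Z.map (fun z => Complex.abs ((x:ℂ) - z))).prod := by
  classical
  set B : ℝ := (2:ℝ)^(20*(d+1)^2) with hBdef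
  set n := Multiset.card Z with hn
  have hn1 : 1 ≤ n := by omega
  have hB1 : (1:ℝ) ≤ B := one_le_pow₀ one_le_two
  have hd2 : ((d:ℝ)+1) ≤ 2^d := by
    have h := Nat.lt_two_pow_self (n := d)
    have h2 : ((d+1 : ℕ) : ℝ) ≤ ((2^d : ℕ) : ℝ) := by exact_mod_cast h
    push_cast at h2
    linarith
  set CM : ℝ := ((d:ℝ)+1) * 2^d * 2^d * (2*((d:ℝ)+1))^d with hCMdef
  have hCM0 : (0:ℝ) < CM := by positivity
  have h2d1 : (1:ℝ) ≤ 2^d := one_le_pow₀ one_le_two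
  have hBnum : 2^d * CM < B / 2 := by
    rw [lt_div_iff₀ (zero_lt_two)]
    have e1 : (2*((d:ℝ)+1))^d ≤ 2^((d+1)*d) := by
      calc (2*((d:ℝ)+1))^d ≤ ((2:ℝ)^(d+1))^d := by
            apply pow_le_pow_left₀ (by positivity)
            calc 2*((d:ℝ)+1) ≤ 2*2^d := by linarith
            _ = 2^(d+1) := by rw [pow_succ]; ring
      _ = 2^((d+1)*d) := by rw [← pow_mul]
    have e2 : CM ≤ 2^d*2^d*2^d*2^((d+1)*d) := by
      rw [hCMdef]
      gcongr
    calc 2^d * CM * 2 ≤ 2^d * (2^d*2^d*2^d*2^((d+1)*d)) * 2 := by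
          have h0 : (0:ℝ) < 2^d := by positivity
          gcongr
    _ = 2^(d + (d + (d + (d + (d+1)*d))) + 1) := by
          rw [pow_add, pow_add, pow_add, pow_add, pow_succ]
          ring
    _ < B := by
          rw [hBdef]
          apply pow_lt_pow_right₀ one_lt_two
          nlinarith
  set τ : ℝ := |x|/2 with hτdef
  have hτB : B/2 < τ := by rw [hτdef]; linarith
  have hτ1 : (1:ℝ) ≤ τ := by
    have : (2:ℝ) ≤ B := by
      rw [hBdef]
      calc (2:ℝ) = 2^1 := (pow_one 2).symm
      _ ≤ _ := pow_le_pow_right₀ one_le_two (by nlinarith)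
    linarith
  have hτpos : (0:ℝ) < τ := by linarith
  have hτ4 : (4:ℝ) ≤ τ := by
    have : (8:ℝ) ≤ B := by
      rw [hBdef]
      calc (8:ℝ) = 2^3 := by norm_num
      _ ≤ _ := pow_le_pow_right₀ one_le_two (by nlinarith)
    linarith
  have habsx : Complex.abs ((x:ℂ)) = 2*τ := by rw [Complex.abs_ofReal, hτdef]; ring
  set F : Multiset ℂ := Z.filter (fun z => τ < Complex.abs z) with hFdef
  set G : Multiset ℂ := Z.filter (fun z => ¬ τ < Complex.abs z) with hGdef
  have hZsplit : F + G = Z := Multiset.filter_add_not (fun z => τ < Complex.abs z) Z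
  set f := Multiset.card F with hf
  set g := Multiset.card G with hg
  have hfg : f + g = n := by rw [hf, hg, ← Multiset.card_add, hZsplit]
  have hFle : F ≤ Z := Multiset.filter_le _ _
  have hfn : f ≤ n := by omega
  set pF : ℝ := (F.map Complex.abs).prod with hpFdef
  have hpF0 : 0 ≤ pF := prod_abs_nonneg F
  have hFz : ∀ z ∈ F, τ < Complex.abs z := by
    intro z hz
    rw [hFdef] at hz
    have h' := Multiset.of_mem_filter hz
    exact h'
  have hGz : ∀ z ∈ G, Complex.abs z ≤ τ := by
    intro z hz
    rw [hGdef] at hz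
    have h' := Multiset.of_mem_filter hz
    exact le_of_not_gt h'
  have hterm : ∀ A ∈ Z.powersetCard k, (A.map Complex.abs).prod ≤ pF * τ^k / τ^f := by
    intro A hAmem
    obtain ⟨hAle, hAcard⟩ := (Multiset.mem_powersetCard).1 hAmem
    set AF : Multiset ℂ := A.filter (fun z => τ < Complex.abs z) with hAFdef
    set AG : Multiset ℂ := A.filter (fun z => ¬ τ < Complex.abs z) with hAGdef
    have hAsplit : AF + AG = A := Multiset.filter_add_not (fun z => τ < Complex.abs z) A
    have hAFle : AF ≤ F := by
      rw [hAFdef, hFdef]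
      exact Multiset.filter_le_filter _ hAle
    set c := Multiset.card AF with hc
    have hcf : c ≤ f := Multiset.card_le_card hAFle
    have hck : c ≤ k := by
      rw [← hAcard, ← hAsplit, Multiset.card_add]
      omega
    have hAGcard : Multiset.card AG = k - c := by
      have : Multiset.card AF + Multiset.card AG = k := by
        rw [← Multiset.card_add, hAsplit, hAcard]
      omega
    have h1 : (A.map Complex.abs).prod = (AF.map Complex.abs).prod * (AG.map Complex.abs).prod := by
      rw [← Multiset.prod_add, ← Multiset.map_add, hAsplit]
    have h2 : (AG.map Complex.abs).prod ≤ τ^(k-c) := by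
      calc (AG.map Complex.abs).prod ≤ (AG.map (fun _ : ℂ => τ)).prod := by
            apply Multiset.prod_map_le_prod_map₀
            · intro i _; exact AbsoluteValue.nonneg _ _
            · intro i hi
              rw [hAGdef] at hi
              have h' := Multiset.of_mem_filter hi
              exact le_of_not_gt h'
      _ = τ^(k-c) := by rw [Multiset.map_const', Multiset.prod_replicate, hAGcard]
    have h3 : (AF.map Complex.abs).prod * τ^(f-c) ≤ pF := by
      have hsplitF : pF = ((F - AF).map Complex.abs).prod * (AF.map Complex.abs).prod := by
        rw [hpFdef]
        conv_lhs => rw [← tsub_add_cancel_of_le hAFle]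
        rw [Multiset.map_add, Multiset.prod_add]
      have hcardFA : Multiset.card (F - AF) = f - c := by rw [Multiset.card_sub hAFle]
      have h4 : τ^(f-c) ≤ ((F - AF).map Complex.abs).prod := by
        calc τ^(f-c) = ((F - AF).map (fun _ : ℂ => τ)).prod := by
              rw [Multiset.map_const', Multiset.prod_replicate, hcardFA]
        _ ≤ _ := by
            apply Multiset.prod_map_le_prod_map₀
            · intro i _; exact hτpos.le
            · intro i hi
              exact (hFz i (Multiset.mem_of_le (Multiset.sub_le_self _ _) hi)).le
      calc (AF.map Complex.abs).prod * τ^(f-c)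
          ≤ (AF.map Complex.abs).prod * ((F - AF).map Complex.abs).prod :=
            mul_le_mul_of_nonneg_left h4 (prod_abs_nonneg AF)
      _ = pF := by rw [hsplitF, mul_comm]
    rw [le_div_iff₀ (pow_pos hτpos f)]
    calc (A.map Complex.abs).prod * τ^f ≤ ((AF.map Complex.abs).prod * τ^(k-c)) * τ^f := by
          rw [h1]
          exact mul_le_mul_of_nonneg_right
            (mul_le_mul_of_nonneg_left h2 (prod_abs_nonneg AF)) (pow_nonneg hτpos.le f)
    _ = ((AF.map Complex.abs).prod * τ^(f-c)) * τ^k := by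
          rw [mul_assoc, mul_assoc, ← pow_add, ← pow_add]
          congr 2
          omega
    _ ≤ pF * τ^k := mul_le_mul_of_nonneg_right h3 (pow_nonneg hτpos.le k)
  have hstar : τ^f ≤ 2^n * (lc * pF) * τ^k := by
    have hbnd0 : (0:ℝ) ≤ pF * τ^k / τ^f := by positivity
    have h1 := esymm_abs_le Z k _ hbnd0 hterm
    have h2 : 1 ≤ lc * (2^n * (pF * τ^k / τ^f)) :=
      le_trans hes (mul_le_mul_of_nonneg_left h1 hlc0)
    have h3 := mul_le_mul_of_nonneg_left h2 (pow_nonneg hτpos.le f)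
    have h4 : τ^f * (lc * (2^n * (pF * τ^k / τ^f))) = 2^n * (lc*pF) * τ^k := by
      field_simp
    rw [mul_one, h4] at h3
    exact h3
  have hCMb : lc * pF ≤ CM := by
    set δ : ℝ := 1/(2*((n:ℝ)+1)) with hδdef
    have hδ0 : (0:ℝ) < δ := by positivity
    have hsep : ∀ s, s < n+1 → ∀ t', t' < n+1 → ∀ r : ℝ,
        |r - (1 + (2*(s:ℝ)+1)*δ)| < δ → |r - (1 + (2*(t':ℝ)+1)*δ)| < δ → s = t' := by
      intro s hs t' ht' r h1 h2
      by_contra hne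
      have hd1 : |((1:ℝ) + (2*(s:ℝ)+1)*δ) - (1 + (2*(t':ℝ)+1)*δ)| = 2*δ*|(s:ℝ) - t'| := by
        have e : ((1:ℝ) + (2*(s:ℝ)+1)*δ) - (1 + (2*(t':ℝ)+1)*δ) = 2*δ*((s:ℝ) - t') := by ring
        rw [e, abs_mul, abs_of_nonneg (by positivity : (0:ℝ) ≤ 2*δ)]
      have hd3 : (1:ℝ) ≤ |(s:ℝ) - (t':ℝ)| := by
        have h0 : ((s:ℤ) - (t':ℤ)) ≠ 0 := by
          intro hcc
          apply hne
          omega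
        have h1' : (1:ℤ) ≤ |(s:ℤ) - (t':ℤ)| := Int.one_le_abs h0
        have h2' : ((|(s:ℤ) - (t':ℤ)| : ℤ) : ℝ) = |(s:ℝ) - (t':ℝ)| := by
          push_cast
          ring_nf
        calc (1:ℝ) ≤ ((|(s:ℤ) - (t':ℤ)| : ℤ) : ℝ) := by exact_mod_cast h1'
        _ = _ := h2'
      have htri : |((1:ℝ) + (2*(s:ℝ)+1)*δ) - (1 + (2*(t':ℝ)+1)*δ)|
          ≤ |r - (1 + (2*(s:ℝ)+1)*δ)| + |r - (1 + (2*(t':ℝ)+1)*δ)| := by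
        have h5 := abs_sub_le ((1:ℝ) + (2*(s:ℝ)+1)*δ) r (1 + (2*(t':ℝ)+1)*δ)
        rw [abs_sub_comm ((1:ℝ) + (2*(s:ℝ)+1)*δ) r] at h5
        linarith
      rw [hd1] at htri
      nlinarith
    obtain ⟨t, htN, hty⟩ := pigeon (Z.map Complex.abs) (n+1) (by rw [Multiset.card_map]; omega)
        (fun t => 1 + (2*(t:ℝ)+1)*δ) δ hsep
    set y : ℝ := 1 + (2*(t:ℝ)+1)*δ with hydef
    have hy1 : 1 ≤ y := by
      rw [hydef]
      have h0 : (0:ℝ) ≤ (t:ℝ) := Nat.cast_nonneg t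
      nlinarith
    have hy2 : y ≤ 2 := by
      rw [hydef, hδdef]
      have htn : (t:ℝ) ≤ (n:ℝ) := by exact_mod_cast Nat.lt_succ_iff.1 htN
      have hpos : (0:ℝ) < 2*((n:ℝ)+1) := by positivity
      have h0 : (2*(t:ℝ)+1) * (1/(2*((n:ℝ)+1))) ≤ 1 := by
        rw [mul_one_div, div_le_one hpos]
        linarith
      linarith
    have hyd : ∀ z ∈ Z, δ ≤ |Complex.abs z - y| := by
      intro z hz
      exact hty _ (Multiset.mem_map_of_mem _ hz)
    have habsy : Complex.abs ((y:ℂ)) = y := by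
      rw [Complex.abs_ofReal]
      exact abs_of_nonneg (by linarith)
    have hFy : ∀ z ∈ F, 1/2 * Complex.abs z ≤ Complex.abs ((y:ℂ) - z) := by
      intro z hz
      have h1 : Complex.abs z - Complex.abs ((y:ℂ)) ≤ Complex.abs ((y:ℂ) - z) := by
        rw [AbsoluteValue.map_sub]
        have := norm_sub_norm_le z ((y:ℂ))
        simpa [Complex.norm_eq_abs] using this
      have h2 := hFz z hz
      rw [habsy] at h1
      nlinarith
    have hGy : ∀ z ∈ Z, δ ≤ Complex.abs ((y:ℂ) - z) := by
      intro z hz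
      have h1 : |Complex.abs ((y:ℂ)) - Complex.abs z| ≤ Complex.abs ((y:ℂ) - z) := by
        have := abs_norm_sub_norm_le ((y:ℂ)) z
        simpa [Complex.norm_eq_abs] using this
      rw [habsy] at h1
      have h2 := hyd z hz
      rw [abs_sub_comm] at h1
      linarith
    have hFster : (1/2:ℝ)^f * pF ≤ (F.map (fun z => Complex.abs ((y:ℂ) - z))).prod := by
      have e : (1/2:ℝ)^f * pF = (F.map (fun z => 1/2 * Complex.abs z)).prod := by
        rw [Multiset.prod_map_mul, Multiset.map_const', Multiset.prod_replicate, hpFdef]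
      rw [e]
      apply Multiset.prod_map_le_prod_map₀
      · intro i _; positivity
      · intro i hi; exact hFy i hi
    have hGster : δ^g ≤ (G.map (fun z => Complex.abs ((y:ℂ) - z))).prod := by
      calc δ^g = (G.map (fun _ : ℂ => δ)).prod := by
            rw [Multiset.map_const', Multiset.prod_replicate]
      _ ≤ _ := by
          apply Multiset.prod_map_le_prod_map₀
          · intro i _; exact hδ0.le
          · intro i hi
            apply hGy
            rw [hGdef] at hi
            exact Multiset.mem_of_le (Multiset.filter_le _ _) hi
    have hprodY : ((1/2:ℝ)^f * pF) * δ^g ≤ (Z.map (fun z => Complex.abs ((y:ℂ) - z))).prod := by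
      conv_rhs => rw [← hZsplit]
      rw [Multiset.map_add, Multiset.prod_add]
      have hnn : (0:ℝ) ≤ (F.map (fun z => Complex.abs ((y:ℂ) - z))).prod := by
        apply Multiset.prod_nonneg
        intro a ha
        obtain ⟨z, _, rfl⟩ := Multiset.mem_map.1 ha
        exact AbsoluteValue.nonneg _ _
      exact mul_le_mul hFster hGster (by positivity) hnn
    have hup := heval y (by linarith) hy2
    have h6 : lc * (((1/2:ℝ)^f * pF) * δ^g) ≤ ((d:ℝ)+1) * 2^d :=
      le_trans (mul_le_mul_of_nonneg_left hprodY hlc0) hup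
    have hδg : (0:ℝ) < δ^g := pow_pos hδ0 g
    have h7 : lc * pF ≤ ((d:ℝ)+1) * 2^d * 2^f * (1/δ)^g := by
      have e : lc * (((1/2:ℝ)^f * pF) * δ^g) = (lc * pF) * δ^g / 2^f := by
        rw [div_pow, one_pow]
        field_simp
      rw [e, div_le_iff₀ (by positivity : (0:ℝ) < (2:ℝ)^f)] at h6
      have h8 : lc * pF ≤ ((d:ℝ)+1)*2^d*2^f / δ^g := by
        rw [le_div_iff₀ hδg]
        calc lc * pF * δ^g = lc * pF * δ^g := rfl
        _ ≤ ((d:ℝ)+1)*2^d*2^f := h6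
      calc lc * pF ≤ ((d:ℝ)+1)*2^d*2^f/δ^g := h8
      _ = ((d:ℝ)+1)*2^d*2^f*(1/δ)^g := by
          rw [one_div, inv_pow, div_eq_mul_inv]
    have e1 : (1/δ) = 2*((n:ℝ)+1) := by rw [hδdef, one_div_one_div]
    have e2 : (1/δ)^g ≤ (2*((d:ℝ)+1))^d := by
      rw [e1]
      have hcast : (n:ℝ) ≤ (d:ℝ) := by exact_mod_cast hnd
      calc (2*((n:ℝ)+1))^g ≤ (2*((d:ℝ)+1))^g := by
            apply pow_le_pow_left₀ (by positivity)
            linarith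
      _ ≤ (2*((d:ℝ)+1))^d := by
            apply pow_le_pow_right₀ ?_ (by omega)
            have : (0:ℝ) ≤ (d:ℝ) := Nat.cast_nonneg d
            linarith
    have e3 : (2:ℝ)^f ≤ 2^d := pow_le_pow_right₀ one_le_two (by omega)
    calc lc * pF ≤ ((d:ℝ)+1)*2^d*2^f*(1/δ)^g := h7
    _ ≤ ((d:ℝ)+1)*2^d*2^d*(2*((d:ℝ)+1))^d := by
        have h9 : (0:ℝ) ≤ (1/δ)^g := by positivity
        gcongr
    _ = CM := by rw [hCMdef]
  have hfk : f ≤ k := by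
    by_contra hcon
    push_neg at hcon
    have h1 : τ^(k+1) ≤ τ^f := pow_le_pow_right₀ hτ1 (by omega)
    have h2 : τ^f ≤ 2^n * CM * τ^k := by
      calc τ^f ≤ 2^n * (lc * pF) * τ^k := hstar
      _ ≤ 2^n * CM * τ^k := by
          apply mul_le_mul_of_nonneg_right _ (pow_nonneg hτpos.le k)
          exact mul_le_mul_of_nonneg_left hCMb (by positivity)
    have h4 : τ ≤ 2^n * CM := by
      have h5 : τ^k * τ ≤ τ^k * (2^n * CM) := by
        rw [← pow_succ]
        calc τ^(k+1) ≤ 2^n*CM*τ^k := le_trans h1 h2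
        _ = τ^k * (2^n*CM) := by ring
      exact le_of_mul_le_mul_left h5 (pow_pos hτpos k)
    have h6 : (2:ℝ)^n * CM ≤ 2^d * CM :=
      mul_le_mul_of_nonneg_right (pow_le_pow_right₀ one_le_two hnd) hCM0.le
    linarith
  have hfm : f ≤ m := le_trans hfk hkm
  have hroot : ∀ z ∈ F, (B*ε/(4*τ)) * Complex.abs z ≤ Complex.abs ((x:ℂ) - z) := by
    intro z hz
    have hcoef0 : (0:ℝ) < B*ε/(4*τ) := by positivity
    rcases le_or_gt (Complex.abs z) (4*τ) with h | h
    · calc (B*ε/(4*τ)) * Complex.abs z ≤ (B*ε/(4*τ)) * (4*τ) :=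
          mul_le_mul_of_nonneg_left h hcoef0.le
      _ = B*ε := by field_simp
      _ ≤ _ := (hfar z (Multiset.mem_of_le hFle hz)).le
    · have h1 : Complex.abs z - Complex.abs ((x:ℂ)) ≤ Complex.abs ((x:ℂ) - z) := by
        rw [AbsoluteValue.map_sub]
        have := norm_sub_norm_le z ((x:ℂ))
        simpa [Complex.norm_eq_abs] using this
      rw [habsx] at h1
      have h2 : B*ε ≤ 2*τ := by nlinarith
      have h4 : B*ε/(4*τ) ≤ 1/2 := by
        rw [div_le_div_iff₀ (by positivity) (by norm_num)]
        linarith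
      have h3 : (B*ε/(4*τ)) * Complex.abs z ≤ Complex.abs z / 2 := by
        nlinarith [AbsoluteValue.nonneg Complex.abs z]
      nlinarith
  have hrootG : ∀ z ∈ G, τ ≤ Complex.abs ((x:ℂ) - z) := by
    intro z hz
    have h1 : Complex.abs ((x:ℂ)) - Complex.abs z ≤ Complex.abs ((x:ℂ) - z) := by
      have := norm_sub_norm_le ((x:ℂ)) z
      simpa [Complex.norm_eq_abs] using this
    rw [habsx] at h1
    have h2 := hGz z hz
    linarith
  have hprodX : ((B*ε/(4*τ))^f * pF) * τ^g ≤ (Z.map (fun z => Complex.abs ((x:ℂ) - z))).prod := by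
    conv_rhs => rw [← hZsplit]
    rw [Multiset.map_add, Multiset.prod_add]
    have hFx : (B*ε/(4*τ))^f * pF ≤ (F.map (fun z => Complex.abs ((x:ℂ) - z))).prod := by
      have e : (B*ε/(4*τ))^f * pF = (F.map (fun z => (B*ε/(4*τ)) * Complex.abs z)).prod := by
        rw [Multiset.prod_map_mul, Multiset.map_const', Multiset.prod_replicate, hpFdef]
      rw [e]
      apply Multiset.prod_map_le_prod_map₀
      · intro i _; positivity
      · intro i hi; exact hroot i hi
    have hGx : τ^g ≤ (G.map (fun z => Complex.abs ((x:ℂ) - z))).prod := by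
      calc τ^g = (G.map (fun _ : ℂ => τ)).prod := by
            rw [Multiset.map_const', Multiset.prod_replicate]
      _ ≤ _ := by
          apply Multiset.prod_map_le_prod_map₀
          · intro i _; exact hτpos.le
          · intro i hi; exact hrootG i hi
    have hnn : (0:ℝ) ≤ (F.map (fun z => Complex.abs ((x:ℂ) - z))).prod := by
      apply Multiset.prod_nonneg
      intro a ha
      obtain ⟨z, _, rfl⟩ := Multiset.mem_map.1 ha
      exact AbsoluteValue.nonneg _ _
    exact mul_le_mul hFx hGx (by positivity) hnn
  have hlb : (B*ε/(4*τ))^f * τ^g * (τ^f/(2^n * τ^k))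
      ≤ lc * (Z.map (fun z => Complex.abs ((x:ℂ) - z))).prod := by
    have h1 : τ^f/(2^n * τ^k) ≤ lc * pF := by
      rw [div_le_iff₀ (by positivity)]
      calc τ^f ≤ 2^n*(lc*pF)*τ^k := hstar
      _ = lc * pF * (2^n*τ^k) := by ring
    calc (B*ε/(4*τ))^f * τ^g * (τ^f/(2^n*τ^k))
        ≤ (B*ε/(4*τ))^f * τ^g * (lc * pF) := by
          apply mul_le_mul_of_nonneg_left h1 (by positivity)
    _ = lc * (((B*ε/(4*τ))^f * pF) * τ^g) := by ring
    _ ≤ _ := mul_le_mul_of_nonneg_left hprodX hlc0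
  have hgdecomp : g = k + (m - f) := by omega
  have hτne : τ ≠ 0 := ne_of_gt hτpos
  have hval : (B*ε/(4*τ))^f * τ^g * (τ^f/(2^n * τ^k)) = (B*ε/4)^f * τ^(m-f) / 2^n := by
    have e1 : (B*ε/(4*τ))^f = (B*ε/4)^f / τ^f := by
      rw [div_pow, div_pow, mul_pow, div_div]
      rw [mul_pow]
    have e2 : τ^g = τ^k * τ^(m-f) := by rw [hgdecomp, pow_add]
    rw [e1, e2]
    generalize (B*ε/4)^f = X
    have h1 : (τ:ℝ)^f ≠ 0 := pow_ne_zero f hτne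
    have h2 : (τ:ℝ)^k ≠ 0 := pow_ne_zero k hτne
    have h3 : ((2:ℝ)^n) ≠ 0 := by positivity
    field_simp
  have hfinal : ε^d < (B*ε/4)^f * τ^(m-f) / 2^n := by
    have hq1 : (B/2)^(m-f) ≤ τ^(m-f) := pow_le_pow_left₀ (by positivity) hτB.le _
    have hq2 : ε^d ≤ ε^f := pow_le_pow_of_le_one hε0.le hε1.le (by omega)
    have hB4 : (1:ℝ) ≤ B/4 := by
      rw [le_div_iff₀ (by norm_num : (0:ℝ) < 4), hBdef]
      calc (1:ℝ)*4 = 2^2 := by norm_num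
      _ ≤ 2^(20*(d+1)^2) := pow_le_pow_right₀ one_le_two (by nlinarith)
    have hq3 : (2:ℝ)^n < (B/4)^f * (B/2)^(m-f) := by
      calc (2:ℝ)^n ≤ 2^d := pow_le_pow_right₀ one_le_two hnd
      _ < B/4 := by
          rw [lt_div_iff₀ (by norm_num : (0:ℝ) < 4), hBdef]
          calc (2:ℝ)^d * 4 = 2^(d+2) := by rw [pow_add]; norm_num
          _ < 2^(20*(d+1)^2) := pow_lt_pow_right₀ one_lt_two (by nlinarith)
      _ ≤ (B/4)^m := le_self_pow₀ hB4 (by omega)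
      _ = (B/4)^f * (B/4)^(m-f) := by rw [← pow_add]; congr 1; omega
      _ ≤ (B/4)^f * (B/2)^(m-f) := by
          apply mul_le_mul_of_nonneg_left _ (by positivity)
          apply pow_le_pow_left₀ (by positivity)
          linarith
    have hεf : (0:ℝ) < ε^f := pow_pos hε0 f
    have hq4 : ε^d * 2^n < ε^f * ((B/4)^f * (B/2)^(m-f)) := by
      calc ε^d * 2^n ≤ ε^f * 2^n :=
            mul_le_mul_of_nonneg_right hq2 (by positivity)
      _ < ε^f * ((B/4)^f * (B/2)^(m-f)) := mul_lt_mul_of_pos_left hq3 hεf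
    have hq5 : ε^f * ((B/4)^f * (B/2)^(m-f)) ≤ (B*ε/4)^f * τ^(m-f) := by
      have e : ε^f * (B/4)^f = (B*ε/4)^f := by rw [← mul_pow]; congr 1; ring
      calc ε^f * ((B/4)^f * (B/2)^(m-f)) = (B*ε/4)^f * (B/2)^(m-f) := by rw [← e]; ring
      _ ≤ (B*ε/4)^f * τ^(m-f) := mul_le_mul_of_nonneg_left hq1 (by positivity)
    rw [lt_div_iff₀ (by positivity : (0:ℝ) < (2:ℝ)^n)]
    calc ε^d * 2^n < ε^f * ((B/4)^f * (B/2)^(m-f)) := hq4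
    _ ≤ (B*ε/4)^f * τ^(m-f) := hq5
  calc ε^d < (B*ε/4)^f * τ^(m-f) / 2^n := hfinal
  _ = (B*ε/(4*τ))^f * τ^g * (τ^f/(2^n * τ^k)) := hval.symm
  _ ≤ _ := hlb

private lemma snd_core (d : ℕ) (hd : 1 ≤ d) (Z : Multiset ℂ) (lc : ℝ) (k m : ℕ)
    (hm : 1 ≤ m) (hkm : k ≤ m) (hcard : Multiset.card Z = k + m) (hnd : Multiset.card Z ≤ d)
    (hlc0 : 0 ≤ lc)
    (hes : 1 ≤ lc * Complex.abs (Z.esymm k))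
    (heval : ∀ y : ℝ, 0 ≤ y → y ≤ 2 →
      lc * ((Z.map (fun z => Complex.abs ((y:ℂ) - z))).prod) ≤ ((d:ℝ)+1) * 2^d)
    (ε x : ℝ) (hε0 : 0 < ε) (hε1 : ε < 1)
    (hfar : ∀ z ∈ Z, (2:ℝ)^(20*(d+1)^2) * ε < Complex.abs ((x:ℂ) - z)) :
    ε ^ d < lc * (Z.map (fun z => Complex.abs ((x:ℂ) - z))).prod := by
  have ha0 : lc * (Z.map Complex.abs).prod ≤ ((d:ℝ)+1) * 2^d := by
    have h := heval 0 le_rfl zero_le_two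
    have e : (Z.map (fun z => Complex.abs (((0:ℝ):ℂ) - z))) = Z.map Complex.abs := by
      apply Multiset.map_congr rfl
      intro z _
      simp
    rwa [e] at h
  rcases le_or_gt |x| ((2:ℝ)^(20*(d+1)^2)) with h | h
  · exact snd_caseA d hd Z lc k m hm hkm hcard hnd hlc0 hes ha0 ε x hε0 hε1 hfar h
  · exact snd_caseB d hd Z lc k m hm hkm hcard hnd hlc0 hes heval ε x hε0 hε1 hfar h

def IsSNDOfDegree (d : ℕ) (P : Polynomial ℝ) : Prop :=
  P.natDegree ≤ d ∧ (∀ i, |P.coeff i| ≤ 1) ∧ ∃ j, 2 * j ≤ d ∧ |P.coeff (d - j)| = 1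

theorem stmt_11 (d : ℕ) (hd : 1 ≤ d) :
    ∃ B : ℝ, 0 < B ∧
      ∀ P : Polynomial ℝ, IsSNDOfDegree d P →
      ∀ ε : ℝ, 0 < ε → ε < 1 →
      ∀ x : ℝ, |P.eval x| ≤ ε ^ d →
        ∃ z ∈ (P.map (Complex.ofRealHom : ℝ →+* ℂ)).roots,
          ‖(x : ℂ) - z‖ ≤ B * ε := by
  refine ⟨(2:ℝ)^(20*(d+1)^2), by positivity, ?_⟩
  intro P hSND ε hε0 hε1 x hx
  obtain ⟨hdeg, hcoeff, j, hj2, hj1⟩ := hSND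
  by_contra hcon
  push_neg at hcon
  set Pc : Polynomial ℂ := P.map (Complex.ofRealHom : ℝ →+* ℂ) with hPcdef
  set Z : Multiset ℂ := Pc.roots with hZdef
  set n := P.natDegree with hndef
  -- basic facts
  have hmn : d - j ≤ n := by
    apply Polynomial.le_natDegree_of_ne_zero
    intro h
    rw [h] at hj1
    simp at hj1
  have hP0 : P ≠ 0 := by
    intro h
    rw [h] at hj1
    simp at hj1
  have hPc0 : Pc ≠ 0 := (Polynomial.map_ne_zero_iff Complex.ofReal_injective).2 hP0
  have hdegPc : Pc.natDegree = n := P.natDegree_map_eq_of_injective Complex.ofReal_injective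
  have hsplits : Pc.Splits := IsAlgClosed.splits Pc
  have hZcard : Multiset.card Z = n := by
    rw [hZdef, ← hdegPc]
    exact splits_iff_card_roots.1 hsplits
  set lc : ℝ := Complex.abs Pc.leadingCoeff with hlcdef
  have hlcR : Pc.leadingCoeff = Complex.ofRealHom P.leadingCoeff :=
    Polynomial.leadingCoeff_map_of_injective Complex.ofReal_injective P
  have hlc0 : 0 ≤ lc := AbsoluteValue.nonneg _ _
  -- eval formula
  have hfact : Pc = Polynomial.C Pc.leadingCoeff * (Z.map fun a => Polynomial.X - Polynomial.C a).prod :=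
    hsplits.eq_prod_roots
  have hevalabs : ∀ y : ℝ, |P.eval y| = lc * (Z.map (fun z => Complex.abs ((y:ℂ) - z))).prod := by
    intro y
    have h1 : ((P.eval y : ℝ) : ℂ) = Pc.eval (y:ℂ) := by
      rw [hPcdef, Polynomial.eval_map]
      exact (Polynomial.eval₂_at_apply Complex.ofRealHom y).symm
    have h2 : Complex.abs ((P.eval y : ℝ) : ℂ) = |P.eval y| := Complex.abs_ofReal _
    rw [← h2, h1]
    conv_lhs => rw [hfact]
    rw [Polynomial.eval_mul, Polynomial.eval_C, map_mul, Polynomial.eval_multiset_prod]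
    congr 1
    rw [Multiset.map_map, map_multiset_prod, Multiset.map_map]
    congr 1
    ext z
    simp
  -- coeff formula
  have hcoefff : ∀ t : ℕ, t ≤ n → |P.coeff (n - t)| = lc * Complex.abs (Z.esymm t) := by
    intro t ht
    have h1 : Pc.coeff (n - t) = Pc.leadingCoeff * (-1) ^ (n - (n - t)) * Z.esymm (n - (n - t)) := by
      have := Polynomial.coeff_eq_esymm_roots_of_card
        (p := Pc) (by rw [hZcard, hdegPc]) (k := n - t) (by omega)
      rwa [hdegPc] at this
    have h2 : n - (n - t) = t := by omega
    rw [h2] at h1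
    have h3 : Complex.abs (Pc.coeff (n - t)) = |P.coeff (n - t)| := by
      rw [hPcdef, Polynomial.coeff_map]
      exact Complex.abs_ofReal _
    rw [← h3, h1]
    rw [map_mul, map_mul, map_pow]
    simp
    exact Or.inl rfl
  -- set up core hypotheses
  set m : ℕ := d - j with hmdef
  set k : ℕ := n - m with hkdef
  have hm1 : 1 ≤ m := by omega
  have hkm : k ≤ m := by omega
  have hcard' : Multiset.card Z = k + m := by omega
  have hndle : Multiset.card Z ≤ d := by omega
  have hes : 1 ≤ lc * Complex.abs (Z.esymm k) := by
    have : n - k = m := by omega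
    rw [← hcoefff k (by omega), this, hmdef, hj1]
  have heval2 : ∀ y : ℝ, 0 ≤ y → y ≤ 2 →
      lc * ((Z.map (fun z => Complex.abs ((y:ℂ) - z))).prod) ≤ ((d:ℝ)+1) * 2^d := by
    intro y hy0 hy2
    rw [← hevalabs]
    calc |P.eval y| = |∑ i ∈ Finset.range (n + 1), P.coeff i * y ^ i| := by
          rw [Polynomial.eval_eq_sum_range]
    _ ≤ ∑ i ∈ Finset.range (n + 1), |P.coeff i * y ^ i| := Finset.abs_sum_le_sum_abs _ _
    _ ≤ ∑ _i ∈ Finset.range (n + 1), (2:ℝ)^d := by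
        apply Finset.sum_le_sum
        intro i hi
        rw [abs_mul]
        have h1 : |P.coeff i| ≤ 1 := hcoeff i
        have h2 : |y ^ i| ≤ 2 ^ d := by
          rw [abs_pow, abs_of_nonneg hy0]
          calc y ^ i ≤ 2 ^ i := by
                apply pow_le_pow_left₀ hy0 hy2
          _ ≤ 2 ^ d := by
                apply pow_le_pow_right₀ one_le_two
                have := Finset.mem_range.1 hi
                omega
        calc |P.coeff i| * |y ^ i| ≤ 1 * (2:ℝ)^d := by
              apply mul_le_mul h1 h2 (abs_nonneg _) zero_le_one
        _ = (2:ℝ)^d := one_mul _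
    _ = ((n:ℝ) + 1) * 2 ^ d := by
        rw [Finset.sum_const, Finset.card_range]
        push_cast
        ring
    _ ≤ ((d:ℝ)+1) * 2^d := by
        have : (n:ℝ) ≤ (d:ℝ) := by exact_mod_cast hdeg
        nlinarith [pow_pos (zero_lt_two (α := ℝ)) d]
  have hfar : ∀ z ∈ Z, (2:ℝ)^(20*(d+1)^2) * ε < Complex.abs ((x:ℂ) - z) := by
    intro z hz
    exact hcon z hz
  have hlt := snd_core d hd Z lc k m hm1 hkm hcard' hndle hlc0 hes heval2 ε x hε0 hε1 hfar
  rw [← hevalabs] at hlt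
  exact absurd hx (not_le.2 hlt)
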